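/- Let n, μ be natural numbers with μ ≥ 1 and n ≥ 1. If a function f : Fin k → Fin n has exactly μ repeat positions, then μ + 1 ≤ k ≤ n + μ; moreover, the set of pairs (k, f) where k is a natural number and f : Fin k → Fin n has exactly μ repeat positions is finite, with cardinality ∑_{k=μ+1}^{n+μ} ∑_{λ=0}^{μ} Z(k,n,μ+λ,λ). -/

import Mathlib

open Finset

/-- The set of "matching" positions of `f`: positions `i` such that some other
position `j ≠ i` has the same color, `f j = f i`. -/
def matchingSet {k n : ℕ} (f : Fin k → Fin n) : Finset (Fin k) :=
  Finset.univ.filter (fun i => ∃ j, j ≠ i ∧ f j = f i)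

/-- The set of "repeat" positions of `f`: positions `i` such that some earlier
position `j < i` has the same color, `f j = f i`. -/
def repeatSet {k n : ℕ} (f : Fin k → Fin n) : Finset (Fin k) :=
  Finset.univ.filter (fun i => ∃ j, j < i ∧ f j = f i)

/-- The set of "repeated" colors of `f`: colors used by at least two positions. -/
def repeatedColors {k n : ℕ} (f : Fin k → Fin n) : Finset (Fin n) :=
  Finset.univ.filter (fun c => 2 ≤ (Finset.univ.filter (fun i => f i = c)).card)

/-- `Z k n m l` is the number of sequences of `k` balls colored with at most `n`
colors having exactly `m` matching positions and exactly `l` repeated colors. -/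
def Z (k n m l : ℕ) : ℕ :=
  Fintype.card {f : Fin k → Fin n // (matchingSet f).card = m ∧ (repeatedColors f).card = l}

/-- `dsurj m l` is the number of doubly surjective functions `Fin m → Fin l`,
i.e. functions for which every element of `Fin l` has at least two preimages. -/
def dsurj (m l : ℕ) : ℕ :=
  Fintype.card {g : Fin m → Fin l // ∀ c : Fin l, 2 ≤ (Finset.univ.filter (fun i => g i = c)).card}

section Aux

variable {k n : ℕ} (f : Fin k → Fin n)

lemma repeat_fiber (c : Fin n) :
    ((repeatSet f).filter (fun i => f i = c)).card
      = (Finset.univ.filter (fun i => f i = c)).card - 1 := by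
  classical
  set S := Finset.univ.filter (fun i => f i = c) with hS
  rcases S.eq_empty_or_nonempty with h | h
  · have hsub : (repeatSet f).filter (fun i => f i = c) ⊆ S := by
      intro i hi
      simp only [repeatSet, mem_filter, mem_univ, true_and, hS] at *
      exact hi.2
    rw [h] at hsub
    simp [Finset.subset_empty.mp hsub, h]
  · have hm : S.min' h ∈ S := S.min'_mem h
    have hmc : f (S.min' h) = c := (Finset.mem_filter.mp hm).2
    have heq : (repeatSet f).filter (fun i => f i = c) = S.erase (S.min' h) := by
      ext i
      simp only [repeatSet, mem_filter, mem_univ, true_and, mem_erase, hS]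
      constructor
      · rintro ⟨⟨j, hj, hje⟩, hc⟩
        refine ⟨fun hi => ?_, hc⟩
        have hjS : j ∈ S := by rw [hS, mem_filter]; exact ⟨mem_univ _, by rw [hje, hc]⟩
        have := S.min'_le j hjS
        rw [← hi] at this
        exact absurd (lt_of_le_of_lt this hj) (lt_irrefl _)
      · rintro ⟨hne, hc⟩
        have hiS : i ∈ S := by rw [hS, mem_filter]; exact ⟨mem_univ _, hc⟩
        refine ⟨⟨S.min' h, lt_of_le_of_ne (S.min'_le i hiS) (Ne.symm hne), ?_⟩, hc⟩
        rw [hmc, hc]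
    rw [heq, card_erase_of_mem hm]

lemma match_fiber (c : Fin n) :
    ((matchingSet f).filter (fun i => f i = c)).card
      = if 2 ≤ (Finset.univ.filter (fun i => f i = c)).card
          then (Finset.univ.filter (fun i => f i = c)).card else 0 := by
  classical
  set S := Finset.univ.filter (fun i => f i = c) with hS
  have heq : (matchingSet f).filter (fun i => f i = c) = if 2 ≤ S.card then S else ∅ := by
    ext i
    simp only [matchingSet, mem_filter, mem_univ, true_and]
    split_ifs with h2
    · rw [hS, mem_filter]
      constructor
      · rintro ⟨_, hc⟩; exact ⟨mem_univ _, hc⟩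
      · rintro ⟨_, hc⟩
        have hiS : i ∈ S := by rw [hS, mem_filter]; exact ⟨mem_univ _, hc⟩
        obtain ⟨j, hjS, hji⟩ := S.exists_mem_ne h2 i
        have hjc : f j = c := by have := hjS; rw [hS, mem_filter] at this; exact this.2
        exact ⟨⟨j, hji, by rw [hjc, hc]⟩, hc⟩
    · simp only [Finset.notMem_empty, iff_false]
      rintro ⟨⟨j, hji, hje⟩, hc⟩
      apply h2
      have hiS : i ∈ S := by rw [hS, mem_filter]; exact ⟨mem_univ _, hc⟩
      have hjS : j ∈ S := by rw [hS, mem_filter]; exact ⟨mem_univ _, by rw [hje, hc]⟩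
      have : ({j, i} : Finset (Fin k)) ⊆ S := by
        intro x hx; simp only [Finset.mem_insert, Finset.mem_singleton] at hx
        rcases hx with rfl | rfl <;> assumption
      calc 2 = ({j, i} : Finset (Fin k)).card := by rw [Finset.card_insert_of_notMem (by simpa), Finset.card_singleton]
        _ ≤ S.card := Finset.card_le_card this
  rw [heq]
  split_ifs <;> simp

lemma repeat_card_eq : (repeatSet f).card
    = ∑ c : Fin n, ((Finset.univ.filter (fun i => f i = c)).card - 1) := by
  classical
  rw [Finset.card_eq_sum_card_fiberwise (f := f) (t := Finset.univ) (fun x _ => mem_univ _)]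
  exact Finset.sum_congr rfl fun c _ => repeat_fiber f c

lemma match_card_eq : (matchingSet f).card
    = ∑ c : Fin n, (if 2 ≤ (Finset.univ.filter (fun i => f i = c)).card
        then (Finset.univ.filter (fun i => f i = c)).card else 0) := by
  classical
  rw [Finset.card_eq_sum_card_fiberwise (f := f) (t := Finset.univ) (fun x _ => mem_univ _)]
  exact Finset.sum_congr rfl fun c _ => match_fiber f c

lemma repeated_card_eq : (repeatedColors f).card
    = ∑ c : Fin n, (if 2 ≤ (Finset.univ.filter (fun i => f i = c)).card then 1 else 0) := by
  classical
  rw [repeatedColors, Finset.card_filter]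

lemma key_identity : (matchingSet f).card = (repeatSet f).card + (repeatedColors f).card := by
  classical
  rw [match_card_eq, repeat_card_eq, repeated_card_eq, ← Finset.sum_add_distrib]
  refine Finset.sum_congr rfl fun c _ => ?_
  split_ifs with h <;> omega

lemma repeated_le_repeat : (repeatedColors f).card ≤ (repeatSet f).card := by
  classical
  rw [repeat_card_eq, repeated_card_eq]
  refine Finset.sum_le_sum fun c _ => ?_
  split_ifs with h <;> omega

lemma k_eq_sum : k = ∑ c : Fin n, (Finset.univ.filter (fun i => f i = c)).card := by
  classical
  have := Finset.card_eq_sum_card_fiberwise (s := (Finset.univ : Finset (Fin k)))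
    (f := f) (t := Finset.univ) (fun x _ => mem_univ _)
  simpa using this

lemma perk (k n μ : ℕ) :
    (Finset.univ.filter (fun f : Fin k → Fin n => (repeatSet f).card = μ)).card
      = ∑ l ∈ Finset.range (μ + 1), Z k n (μ + l) l := by
  classical
  rw [Finset.card_eq_sum_card_fiberwise
    (f := fun f : Fin k → Fin n => (repeatedColors f).card) (t := Finset.range (μ + 1))
    (fun f hf => by
      rw [Finset.mem_coe, mem_filter] at hf
      show (repeatedColors f).card ∈ ((Finset.range (μ + 1) : Finset ℕ) : Set ℕ)
      rw [Finset.mem_coe, Finset.mem_range]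
      have := repeated_le_repeat f
      omega)]
  refine Finset.sum_congr rfl fun l hl => ?_
  rw [Z, Fintype.card_subtype]
  congr 1
  ext f
  simp only [Finset.filter_filter, mem_filter, mem_univ, true_and]
  have hk := key_identity f
  constructor
  · rintro ⟨h1, h2⟩; exact ⟨by omega, h2⟩
  · rintro ⟨h1, h2⟩; exact ⟨by omega, h2⟩

end Aux

/-- for `n ≥ 1` and `μ ≥ 1`, any coloring of `k` balls with at most `n`
colors with exactly `μ` repeat positions satisfies `μ + 1 ≤ k ≤ n + μ`; the set of all
pairs `(k, f)` with exactly `μ` repeat positions is finite, of cardinality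
`∑_{k=μ+1}^{n+μ} ∑_{l=0}^{μ} Z(k,n,μ+l,l)`. -/


theorem stmt15 (n μ : ℕ) (hn : 1 ≤ n) (hμ : 1 ≤ μ) :
    (∀ (k : ℕ) (f : Fin k → Fin n), (repeatSet f).card = μ → μ + 1 ≤ k ∧ k ≤ n + μ) ∧
    {p : (k : ℕ) × (Fin k → Fin n) | (repeatSet p.2).card = μ}.Finite ∧
    {p : (k : ℕ) × (Fin k → Fin n) | (repeatSet p.2).card = μ}.ncard =
      ∑ k ∈ Finset.Icc (μ + 1) (n + μ),
        ∑ l ∈ Finset.range (μ + 1), Z k n (μ + l) l := by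
  classical
  have bounds : ∀ (k : ℕ) (f : Fin k → Fin n), (repeatSet f).card = μ →
      μ + 1 ≤ k ∧ k ≤ n + μ := by
    intro k f hf
    have hk1 : 1 ≤ k := by
      by_contra h
      interval_cases k
      · have : (repeatSet f) = ∅ := Finset.eq_empty_of_forall_notMem (fun i => i.elim0)
        rw [this] at hf
        simp at hf
        omega
    have hupper : k ≤ n + μ := by
      have h1 := k_eq_sum f
      have h2 : (repeatSet f).card = ∑ c : Fin n,
          ((Finset.univ.filter (fun i => f i = c)).card - 1) := repeat_card_eq f
      have h3 : ∑ c : Fin n, (Finset.univ.filter (fun i => f i = c)).card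
          ≤ ∑ c : Fin n, (((Finset.univ.filter (fun i => f i = c)).card - 1) + 1) :=
        Finset.sum_le_sum fun c _ => by omega
      rw [Finset.sum_add_distrib] at h3
      simp only [Finset.sum_const, Finset.card_univ, Fintype.card_fin, smul_eq_mul, mul_one] at h3
      omega
    refine ⟨?_, hupper⟩
    have h0 : (⟨0, hk1⟩ : Fin k) ∉ repeatSet f := by
      simp only [repeatSet, mem_filter, mem_univ, true_and, not_exists]
      intro j
      rintro ⟨hj, -⟩
      exact absurd hj (by simp [Fin.lt_def])
    have hsub : repeatSet f ⊆ Finset.univ.erase ⟨0, hk1⟩ := by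
      intro i hi
      exact Finset.mem_erase.mpr ⟨fun h => h0 (h ▸ hi), mem_univ _⟩
    have := Finset.card_le_card hsub
    rw [Finset.card_erase_of_mem (mem_univ _), Finset.card_univ, Fintype.card_fin] at this
    omega
  refine ⟨bounds, ?_⟩
  set B : Finset ((k : ℕ) × (Fin k → Fin n)) :=
    (Finset.Icc (μ + 1) (n + μ)).biUnion (fun k =>
      (Finset.univ.filter (fun f : Fin k → Fin n => (repeatSet f).card = μ)).image
        (Sigma.mk k)) with hB
  have hAB : {p : (k : ℕ) × (Fin k → Fin n) | (repeatSet p.2).card = μ} = ↑B := by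
    ext ⟨k, f⟩
    simp only [Set.mem_setOf_eq, Finset.coe_biUnion, Finset.coe_image, Finset.coe_filter,
      Set.mem_iUnion, Set.mem_image, Set.mem_setOf_eq, hB, Finset.mem_coe]
    constructor
    · intro h
      exact ⟨k, Finset.mem_Icc.mpr (bounds k f h), f, ⟨mem_univ _, h⟩, rfl⟩
    · rintro ⟨k', _, f', ⟨-, hf'⟩, heq⟩
      cases heq
      exact hf'
  have hdisj : ∀ k1 ∈ Finset.Icc (μ + 1) (n + μ), ∀ k2 ∈ Finset.Icc (μ + 1) (n + μ),
      k1 ≠ k2 → Disjoint (α := Finset ((k : ℕ) × (Fin k → Fin n)))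
        ((Finset.univ.filter (fun f : Fin k1 → Fin n => (repeatSet f).card = μ)).image
          (Sigma.mk k1))
        ((Finset.univ.filter (fun f : Fin k2 → Fin n => (repeatSet f).card = μ)).image
          (Sigma.mk k2)) := by
    intro k1 _ k2 _ hne
    rw [Finset.disjoint_left]
    rintro p hp1 hp2
    obtain ⟨f1, -, rfl⟩ := Finset.mem_image.mp hp1
    obtain ⟨f2, -, heq⟩ := Finset.mem_image.mp hp2
    exact hne (congrArg Sigma.fst heq).symm
  constructor
  · rw [hAB]; exact B.finite_toSet
  · rw [hAB, Set.ncard_coe_finset, hB, Finset.card_biUnion hdisj]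
    refine Finset.sum_congr rfl fun k _ => ?_
    rw [Finset.card_image_of_injective _ sigma_mk_injective]
    exact perk k n μ
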